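/- Let p₁ : E₁ → B₁ and p₂ : E₂ → B₂ be Hurewicz fibrations with all four spaces metrisable. Then for every r ≥ 2, TC_r[p₁ × p₂ : E₁ × E₂ → B₁ × B₂] ≤ TC_r[p₁ : E₁ → B₁] + TC_r[p₂ : E₂ → B₂]. -/

import Mathlib

open Set unitInterval

universe u v

/-- `HasSecatLE p k`: the base admits an open cover by `k+1` sets,
each admitting a continuous local section of `p`. -/
def HasSecatLE {E : Type u} {B : Type v} [TopologicalSpace E] [TopologicalSpace B]
    (p : E → B) (k : ℕ) : Prop :=
  ∃ U : Fin (k + 1) → Set B, (∀ i, IsOpen (U i)) ∧ (⋃ i, U i) = Set.univ ∧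
    ∀ i, ∃ s : C(U i, E), ∀ x : U i, p (s x) = (x : B)

/-- The sectional category (Schwarz genus) of a map, valued in `ℕ∞`. -/
noncomputable def secat {E : Type u} {B : Type v} [TopologicalSpace E] [TopologicalSpace B]
    (p : E → B) : ℕ∞ :=
  ⨅ k ∈ {k : ℕ | HasSecatLE p k}, (k : ℕ∞)

/-- A Hurewicz fibration: a continuous map with the homotopy lifting property
with respect to all spaces. -/
def IsHurewiczFibration {E : Type u} {B : Type v} [TopologicalSpace E] [TopologicalSpace B]
    (p : E → B) : Prop :=
  Continuous p ∧
    ∀ (Z : Type (max u v)) [TopologicalSpace Z] (H : C(Z × unitInterval, B)) (h : C(Z, E)),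
      (∀ z, p (h z) = H (z, 0)) →
        ∃ H' : C(Z × unitInterval, E), (∀ z, H' (z, 0) = h z) ∧ ∀ q, p (H' q) = H q

/-- The standard time schedule `t_i = i/(r-1)`, `i = 0, …, r-1` in `[0,1]`. -/
noncomputable def schedule (r : ℕ) (i : Fin r) : unitInterval :=
  Set.projIcc 0 1 zero_le_one ((i : ℝ) / ((r : ℝ) - 1))

/-- The space `E^I_B` of paths in `E` along which `p` is constant. -/
def FibConstPath {E : Type u} {B : Type v} [TopologicalSpace E] [TopologicalSpace B]
    (p : E → B) : Set C(unitInterval, E) :=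
  {α | ∀ s t, p (α s) = p (α t)}

/-- The space `E^r_B` of `r`-tuples in `E` lying in a common fibre of `p`. -/
def ParamSpace {E : Type u} {B : Type v} [TopologicalSpace E] [TopologicalSpace B]
    (p : E → B) (r : ℕ) : Set (Fin r → E) :=
  {e | ∀ i j, p (e i) = p (e j)}

/-- The evaluation fibration `Π_r : E^I_B → E^r_B`. -/
noncomputable def paramEval {E : Type u} {B : Type v} [TopologicalSpace E] [TopologicalSpace B]
    (p : E → B) (r : ℕ) (α : FibConstPath p) : ParamSpace p r :=
  ⟨fun i => α.1 (schedule r i), fun _ _ => α.2 _ _⟩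

/-- The `r`-th sequential parametrized topological complexity `TC_r[p : E → B]`. -/
noncomputable def seqParamTC {E : Type u} {B : Type v} [TopologicalSpace E] [TopologicalSpace B]
    (p : E → B) (r : ℕ) : ℕ∞ :=
  secat (paramEval p r)

/-- The `r`-th sequential topological complexity `TC_r(X)` of a space. -/
noncomputable def seqTC (X : Type u) [TopologicalSpace X] (r : ℕ) : ℕ∞ :=
  secat (fun (α : C(unitInterval, X)) (i : Fin r) => α (schedule r i))

/-- `HasCatLE Y k`: `Y` admits an open cover by `k+1` sets each contractible in `Y`. -/
def HasCatLE (Y : Type u) [TopologicalSpace Y] (k : ℕ) : Prop :=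
  ∃ U : Fin (k + 1) → Set Y, (∀ i, IsOpen (U i)) ∧ (⋃ i, U i) = Set.univ ∧
    ∀ i, ∃ (H : C((U i) × unitInterval, Y)) (y : Y),
      (∀ x, H (x, 0) = (x.1 : Y)) ∧ (∀ x, H (x, 1) = y)

/-- The Lusternik–Schnirelmann category of a space, valued in `ℕ∞`. -/
noncomputable def LScat (Y : Type u) [TopologicalSpace Y] : ℕ∞ :=
  ⨅ k ∈ {k : ℕ | HasCatLE Y k}, (k : ℕ∞)


lemma secat_le_of_hasSecatLE {E : Type u} {B : Type v} [TopologicalSpace E] [TopologicalSpace B]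
    {p : E → B} {k : ℕ} (h : HasSecatLE p k) : secat p ≤ (k : ℕ∞) :=
  iInf₂_le k h

lemma secat_eq_top {E : Type u} {B : Type v} [TopologicalSpace E] [TopologicalSpace B]
    {p : E → B} (h : ¬ ∃ k, HasSecatLE p k) : secat p = ⊤ := by
  rw [secat, iInf₂_eq_top]
  intro k hk
  exact absurd ⟨k, hk⟩ h

lemma le_secat {E : Type u} {B : Type v} [TopologicalSpace E] [TopologicalSpace B]
    {p : E → B} {n : ℕ} (h : ∀ k, HasSecatLE p k → n ≤ k) : (n : ℕ∞) ≤ secat p :=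
  le_iInf₂ fun k hk => by exact_mod_cast h k hk

lemma glue_sections {Z T : Type*} [TopologicalSpace Z] [TopologicalSpace T]
    {ι : Type*} (O : ι → Set Z) (hO : ∀ c, IsOpen (O c))
    (hdisj : ∀ c c', c ≠ c' → O c ∩ O c' = ∅)
    (p : T → Z)
    (hs : ∀ c, ∃ s : C(O c, T), ∀ x : O c, p (s x) = x) :
    ∃ s : C(↥(⋃ c, O c), T), ∀ x : ↥(⋃ c, O c), p (s x) = (x : Z) := by
  classical
  choose s hsp using hs
  have hmem : ∀ z : ↥(⋃ c, O c), ∃ c, (z : Z) ∈ O c := fun z => mem_iUnion.mp z.2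
  set c0 : ↥(⋃ c, O c) → ι := fun z => (hmem z).choose with hc0def
  have hc0 : ∀ z, (z : Z) ∈ O (c0 z) := fun z => (hmem z).choose_spec
  set F : ↥(⋃ c, O c) → T := fun z => s (c0 z) ⟨z, hc0 z⟩ with hFdef
  have hF : ∀ (z : ↥(⋃ c, O c)) (c) (hz : (z : Z) ∈ O c), F z = s c ⟨z, hz⟩ := by
    intro z c hz
    have hcc : c0 z = c := by
      by_contra hne
      have h2 := hdisj _ _ hne
      have : (z : Z) ∈ O (c0 z) ∩ O c := ⟨hc0 z, hz⟩
      rw [h2] at this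
      exact this
    simp only [hFdef]
    subst hcc
    rfl
  have hFc : Continuous F := by
    rw [continuous_iff_continuousAt]
    intro z
    set V : Set ↥(⋃ c, O c) := (↑) ⁻¹' O (c0 z) with hVdef
    have hVo : IsOpen V := (hO _).preimage continuous_subtype_val
    have hVmem : z ∈ V := hc0 z
    have hcont : ContinuousOn F V := by
      rw [continuousOn_iff_continuous_restrict]
      have : V.domRestrict F = fun w : ↥V => s (c0 z) ⟨(w : ↥(⋃ c, O c)), w.2⟩ := by
        funext w
        exact hF _ _ w.2
      rw [this]
      exact (s (c0 z)).continuous.comp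
        (Continuous.subtype_mk (continuous_subtype_val.comp continuous_subtype_val) _)
    exact hcont.continuousAt (hVo.mem_nhds hVmem)
  exact ⟨⟨F, hFc⟩, fun z => hsp (c0 z) ⟨z, hc0 z⟩⟩


lemma combine_covers {Z T : Type*} [TopologicalSpace Z] [TopologicalSpace T]
    [NormalSpace Z] [ParacompactSpace Z]
    (p : T → Z) {n m : ℕ}
    (A : Fin (n + 1) → Set Z) (B : Fin (m + 1) → Set Z)
    (hA : ∀ i, IsOpen (A i)) (hB : ∀ j, IsOpen (B j))
    (hAc : (⋃ i, A i) = univ) (hBc : (⋃ j, B j) = univ)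
    (hsec : ∀ i j, ∃ s : C(↥(A i ∩ B j), T), ∀ x : ↥(A i ∩ B j), p (s x) = (x : Z)) :
    ∃ U : Fin (n + m + 1) → Set Z, (∀ i, IsOpen (U i)) ∧ (⋃ i, U i) = Set.univ ∧
      ∀ i, ∃ s : C(U i, T), ∀ x : U i, p (s x) = (x : Z) := by
  classical
  obtain ⟨f, hf⟩ := PartitionOfUnity.exists_isSubordinate isClosed_univ A hA (by rw [hAc])
  obtain ⟨g, hg⟩ := PartitionOfUnity.exists_isSubordinate isClosed_univ B hB (by rw [hBc])
  -- basic facts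
  have hfA : ∀ i z, f i z ≠ 0 → z ∈ A i := fun i z hz =>
    hf i (subset_tsupport _ hz)
  have hgB : ∀ j z, g j z ≠ 0 → z ∈ B j := fun j z hz =>
    hg j (subset_tsupport _ hz)
  have hfsum : ∀ z : Z, ∑ i, f i z = 1 := by
    intro z
    have := f.sum_eq_one (mem_univ z)
    rwa [finsum_eq_sum_of_fintype] at this
  have hgsum : ∀ z : Z, ∑ j, g j z = 1 := by
    intro z
    have := g.sum_eq_one (mem_univ z)
    rwa [finsum_eq_sum_of_fintype] at this
  set c : Fin (n + 1) → Fin (m + 1) → Z → ℝ := fun i j z => f i z * g j z with hcdef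
  have hccont : ∀ i j, Continuous (c i j) := fun i j =>
    (f i).continuous.mul (g j).continuous
  set O : Fin (n + 1) → Fin (m + 1) → Set Z := fun i j =>
    {z | 0 < c i j z} ∩ ⋂ (a) (b) (_ : i < a ∨ j < b), {z | c a b z < c i j z} with hOdef
  have hOopen : ∀ i j, IsOpen (O i j) := by
    intro i j
    refine (isOpen_lt continuous_const (hccont i j)).inter ?_
    exact isOpen_iInter_of_finite fun a => isOpen_iInter_of_finite fun b =>
      isOpen_iInter_of_finite fun _ => isOpen_lt (hccont a b) (hccont i j)
  have hOmem : ∀ i j z, z ∈ O i j ↔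
      (0 < c i j z ∧ ∀ a b, (i < a ∨ j < b) → c a b z < c i j z) := by
    intro i j z
    simp only [hOdef, mem_inter_iff, mem_setOf_eq, mem_iInter]
  -- O i j ⊆ A i ∩ B j
  have hOsub : ∀ i j, O i j ⊆ A i ∩ B j := by
    intro i j z hz
    have h0 := ((hOmem i j z).1 hz).1
    have hfne : f i z ≠ 0 := fun h => by simp [hcdef, h] at h0
    have hgne : g j z ≠ 0 := fun h => by simp [hcdef, h] at h0
    exact ⟨hfA i z hfne, hgB j z hgne⟩
  -- disjointness for pairs with the same index sum
  have hdisj : ∀ (i i' : Fin (n + 1)) (j j' : Fin (m + 1)),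
      (i : ℕ) + (j : ℕ) = (i' : ℕ) + (j' : ℕ) → (i, j) ≠ (i', j') →
      O i j ∩ O i' j' = ∅ := by
    have key : ∀ (i i' : Fin (n + 1)) (j j' : Fin (m + 1)),
        (i : ℕ) + (j : ℕ) = (i' : ℕ) + (j' : ℕ) → i < i' →
        O i j ∩ O i' j' = ∅ := by
      intro i i' j j' hsum hlt
      ext z
      simp only [mem_inter_iff, mem_empty_iff_false, iff_false, not_and]
      intro hz hz'
      have hjj' : j' < j := by
        rw [Fin.lt_def] at hlt ⊢
        omega
      have h1 : c i' j' z < c i j z := ((hOmem i j z).1 hz).2 i' j' (Or.inl hlt)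
      have h2 : c i j z < c i' j' z := ((hOmem i' j' z).1 hz').2 i j (Or.inr hjj')
      exact absurd h1 (not_lt.mpr h2.le)
    intro i i' j j' hsum hne
    rcases lt_trichotomy i i' with h | h | h
    · exact key i i' j j' hsum h
    · subst h
      have : j = j' := Fin.ext (by omega)
      subst this
      exact absurd rfl hne
    · rw [inter_comm]
      exact key i' i j' j hsum.symm h
  -- covering
  have hcov : ∀ z : Z, ∃ i j, z ∈ O i j := by
    intro z
    -- largest maximizer of f · z
    have hex : ∀ (N : ℕ) (h : Z → Fin (N+1) → ℝ), (∑ a, h z a) = 1 → (∀ a, 0 ≤ h z a) →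
        ∃ i, (0 < h z i) ∧ (∀ a, h z a ≤ h z i) ∧ ∀ a, i < a → h z a < h z i := by
      intro N h hsum hnn
      set S : Finset (Fin (N+1)) := Finset.univ.filter (fun i => ∀ a, h z a ≤ h z i) with hSdef
      have hSne : S.Nonempty := by
        obtain ⟨i, -, hi⟩ := Finset.exists_max_image Finset.univ (h z) ⟨0, Finset.mem_univ 0⟩
        exact ⟨i, by simp [hSdef]; intro a; exact hi a (Finset.mem_univ a)⟩
      set i := S.max' hSne with hidef
      have hiS : i ∈ S := S.max'_mem hSne
      have himax : ∀ a, h z a ≤ h z i := by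
        have := Finset.mem_filter.mp hiS
        exact this.2
      refine ⟨i, ?_, himax, ?_⟩
      · by_contra hle
        push_neg at hle
        have : ∀ a, h z a = 0 := fun a => le_antisymm (le_trans (himax a) hle) (hnn a)
        rw [Finset.sum_congr rfl (fun a _ => this a)] at hsum
        simp at hsum
      · intro a hia
        by_contra hle
        push_neg at hle
        have haS : a ∈ S := by
          simp only [hSdef, Finset.mem_filter, Finset.mem_univ, true_and]
          intro b
          exact le_trans (himax b) hle
        exact absurd (S.le_max' a haS) (not_le.mpr hia)
    obtain ⟨i, hfi, hfimax, hfistrict⟩ := hex n (fun z a => f a z) (hfsum z) (fun a => f.nonneg a z)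
    obtain ⟨j, hgj, hgjmax, hgjstrict⟩ := hex m (fun z a => g a z) (hgsum z) (fun a => g.nonneg a z)
    refine ⟨i, j, (hOmem i j z).2 ⟨mul_pos hfi hgj, ?_⟩⟩
    intro a b hab
    rcases hab with h | h
    · calc c a b z = f a z * g b z := rfl
        _ ≤ f a z * g j z := mul_le_mul_of_nonneg_left (hgjmax b) (f.nonneg a z)
        _ < f i z * g j z := mul_lt_mul_of_pos_right (hfistrict a h) hgj
    · calc c a b z = f a z * g b z := rfl
        _ ≤ f i z * g b z := mul_le_mul_of_nonneg_right (hfimax a) (g.nonneg b z)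
        _ < f i z * g j z := mul_lt_mul_of_pos_left (hgjstrict b h) hfi
  -- assemble
  set W : Fin (n + m + 1) → Set Z := fun k =>
    ⋃ (q : {q : Fin (n + 1) × Fin (m + 1) // (q.1 : ℕ) + (q.2 : ℕ) = (k : ℕ)}),
      O q.val.fst q.val.snd with hWdef
  refine ⟨W, fun k => isOpen_iUnion fun q => hOopen _ _, ?_, ?_⟩
  · ext z
    simp only [mem_univ, iff_true, mem_iUnion]
    obtain ⟨i, j, hz⟩ := hcov z
    have hik : (i : ℕ) + (j : ℕ) < n + m + 1 := by omega
    refine ⟨⟨(i : ℕ) + (j : ℕ), hik⟩, ?_⟩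
    rw [hWdef]
    exact mem_iUnion.mpr ⟨⟨(i, j), rfl⟩, hz⟩
  · intro k
    apply glue_sections _ (fun q => hOopen _ _) ?_ p
    · intro q
      obtain ⟨s, hsp⟩ := hsec q.val.fst q.val.snd
      refine ⟨s.comp ⟨Set.inclusion (hOsub q.val.fst q.val.snd), continuous_inclusion _⟩, ?_⟩
      intro x
      exact hsp _
    · intro q q' hne
      apply hdisj
      · exact q.property.trans q'.property.symm
      · exact fun h => hne (Subtype.ext h)

lemma paramEval_prod_hasSecatLE {E₁ B₁ E₂ B₂ : Type u} [TopologicalSpace E₁] [TopologicalSpace B₁]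
    [TopologicalSpace E₂] [TopologicalSpace B₂]
    [TopologicalSpace.MetrizableSpace E₁] [TopologicalSpace.MetrizableSpace E₂]
    (p₁ : E₁ → B₁) (p₂ : E₂ → B₂) (r : ℕ) {n m : ℕ}
    (h1 : HasSecatLE (paramEval p₁ r) n) (h2 : HasSecatLE (paramEval p₂ r) m) :
    HasSecatLE (paramEval (fun x : E₁ × E₂ => (p₁ x.1, p₂ x.2)) r) (n + m) := by
  classical
  set P : E₁ × E₂ → B₁ × B₂ := fun x => (p₁ x.1, p₂ x.2) with hPdef
  -- projections
  have hπ₁mem : ∀ e : ParamSpace P r, (fun i => (e.1 i).1) ∈ ParamSpace p₁ r :=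
    fun e i j => congrArg Prod.fst (e.2 i j)
  have hπ₂mem : ∀ e : ParamSpace P r, (fun i => (e.1 i).2) ∈ ParamSpace p₂ r :=
    fun e i j => congrArg Prod.snd (e.2 i j)
  set π₁ : ParamSpace P r → ParamSpace p₁ r := fun e => ⟨fun i => (e.1 i).1, hπ₁mem e⟩
  set π₂ : ParamSpace P r → ParamSpace p₂ r := fun e => ⟨fun i => (e.1 i).2, hπ₂mem e⟩
  have hπ₁c : Continuous π₁ :=
    Continuous.subtype_mk (continuous_pi fun i =>
      continuous_fst.comp ((continuous_apply i).comp continuous_subtype_val)) _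
  have hπ₂c : Continuous π₂ :=
    Continuous.subtype_mk (continuous_pi fun i =>
      continuous_snd.comp ((continuous_apply i).comp continuous_subtype_val)) _
  obtain ⟨U, hUo, hUc, hUs⟩ := h1
  obtain ⟨V, hVo, hVc, hVs⟩ := h2
  -- metrizability of the base
  letI : MetricSpace (ParamSpace P r) :=
    TopologicalSpace.metrizableSpaceMetric _
  set A : Fin (n + 1) → Set (ParamSpace P r) := fun i => π₁ ⁻¹' (U i) with hAdef
  set B : Fin (m + 1) → Set (ParamSpace P r) := fun j => π₂ ⁻¹' (V j) with hBdef
  have key : ∀ i j, ∃ s : C(↥(A i ∩ B j), ↥(FibConstPath P)),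
      ∀ x : ↥(A i ∩ B j), paramEval P r (s x) = (x : ParamSpace P r) := by
    intro i j
    obtain ⟨s₁, hs₁⟩ := hUs i
    obtain ⟨s₂, hs₂⟩ := hVs j
    set σ₁ : ↥(A i ∩ B j) → ↥(FibConstPath p₁) := fun x => s₁ ⟨π₁ x.1, x.2.1⟩ with hσ₁def
    set σ₂ : ↥(A i ∩ B j) → ↥(FibConstPath p₂) := fun x => s₂ ⟨π₂ x.1, x.2.2⟩ with hσ₂def
    have hσ₁c : Continuous σ₁ :=
      s₁.continuous.comp (Continuous.subtype_mk (hπ₁c.comp continuous_subtype_val) _)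
    have hσ₂c : Continuous σ₂ :=
      s₂.continuous.comp (Continuous.subtype_mk (hπ₂c.comp continuous_subtype_val) _)
    set γ : ↥(A i ∩ B j) → C(unitInterval, E₁ × E₂) :=
      fun x => ((σ₁ x : C(unitInterval, E₁)).prodMk (σ₂ x : C(unitInterval, E₂))) with hγdef
    have hγmem : ∀ x, γ x ∈ FibConstPath P := by
      intro x s t
      have h1' := (σ₁ x).2 s t
      have h2' := (σ₂ x).2 s t
      simp only [hγdef, ContinuousMap.prod_eval, hPdef]
      exact Prod.ext h1' h2'
    have hγc : Continuous γ := by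
      apply ContinuousMap.continuous_of_continuous_uncurry
      apply Continuous.prodMk
      · exact ContinuousEval.continuous_eval.comp
          (((continuous_subtype_val.comp hσ₁c).comp continuous_fst).prodMk continuous_snd)
      · exact ContinuousEval.continuous_eval.comp
          (((continuous_subtype_val.comp hσ₂c).comp continuous_fst).prodMk continuous_snd)
    refine ⟨⟨fun x => ⟨γ x, hγmem x⟩, Continuous.subtype_mk hγc _⟩, ?_⟩
    intro x
    apply Subtype.ext
    funext k
    have e₁ : (σ₁ x : C(unitInterval, E₁)) (schedule r k) = (x.1.1 k).1 := by
      have := congrArg (fun w => w.1 k) (hs₁ ⟨π₁ x.1, x.2.1⟩)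
      exact this
    have e₂ : (σ₂ x : C(unitInterval, E₂)) (schedule r k) = (x.1.1 k).2 := by
      have := congrArg (fun w => w.1 k) (hs₂ ⟨π₂ x.1, x.2.2⟩)
      exact this
    show γ x (schedule r k) = x.1.1 k
    simp only [hγdef, ContinuousMap.prod_eval]
    exact Prod.ext e₁ e₂
  -- apply the combinatorial lemma
  have := combine_covers (paramEval P r) A B
    (fun i => (hUo i).preimage hπ₁c) (fun j => (hVo j).preimage hπ₂c)
    (by rw [hAdef, ← preimage_iUnion, hUc, preimage_univ])
    (by rw [hBdef, ← preimage_iUnion, hVc, preimage_univ])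
    key
  exact this

/-- For fibrations of metrizable spaces, sequential parametrized TC is
subadditive with respect to products. -/
theorem stmt8 {E₁ B₁ E₂ B₂ : Type u} [TopologicalSpace E₁] [TopologicalSpace B₁]
    [TopologicalSpace E₂] [TopologicalSpace B₂]
    [TopologicalSpace.MetrizableSpace E₁] [TopologicalSpace.MetrizableSpace B₁]
    [TopologicalSpace.MetrizableSpace E₂] [TopologicalSpace.MetrizableSpace B₂]
    (p₁ : E₁ → B₁) (p₂ : E₂ → B₂)
    (h₁ : IsHurewiczFibration p₁) (h₂ : IsHurewiczFibration p₂)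
    (r : ℕ) (hr : 2 ≤ r) :
    seqParamTC (fun x : E₁ × E₂ => (p₁ x.1, p₂ x.2)) r ≤
      seqParamTC p₁ r + seqParamTC p₂ r := by
  classical
  by_cases hS₁ : ∃ k, HasSecatLE (paramEval p₁ r) k
  swap
  · have h : seqParamTC p₁ r = ⊤ := secat_eq_top hS₁
    rw [h, top_add]
    exact le_top
  by_cases hS₂ : ∃ k, HasSecatLE (paramEval p₂ r) k
  swap
  · have h : seqParamTC p₂ r = ⊤ := secat_eq_top hS₂
    rw [h, add_top]
    exact le_top
  set n := sInf {k | HasSecatLE (paramEval p₁ r) k} with hn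
  set m := sInf {k | HasSecatLE (paramEval p₂ r) k} with hm
  have hn1 : HasSecatLE (paramEval p₁ r) n := Nat.sInf_mem hS₁
  have hm1 : HasSecatLE (paramEval p₂ r) m := Nat.sInf_mem hS₂
  have hmain := paramEval_prod_hasSecatLE p₁ p₂ r hn1 hm1
  calc seqParamTC (fun x : E₁ × E₂ => (p₁ x.1, p₂ x.2)) r ≤ ((n + m : ℕ) : ℕ∞) :=
        secat_le_of_hasSecatLE hmain
    _ = (n : ℕ∞) + (m : ℕ∞) := by push_cast; rfl
    _ ≤ seqParamTC p₁ r + seqParamTC p₂ r := by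
        exact add_le_add (le_secat fun k hk => Nat.sInf_le hk)
          (le_secat fun k hk => Nat.sInf_le hk)
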